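/- arXiv:1601.05039 — 5 statements merged into one kernel-verified Lean document; each statement's English description precedes it below -/
import Mathlib

section
/- For every α > 0 and all u₁, u₂ > 0, the entropy density h(u₁,u₂) = (u₁/u₂)^α u₁² + (u₁/u₂)^{-α} u₂² + u₁ - log u₁ + u₂ - log u₂ satisfies h(u₁,u₂) ≥ (u₁² + u₂²)/2. -/
theorem stmt_2 (α u₁ u₂ : ℝ) (hα : 0 < α) (h1 : 0 < u₁) (h2 : 0 < u₂) :
    (u₁ / u₂) ^ α * u₁ ^ 2 + (u₁ / u₂) ^ (-α) * u₂ ^ 2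
      + u₁ - Real.log u₁ + u₂ - Real.log u₂ ≥ (u₁ ^ 2 + u₂ ^ 2) / 2 := by
  have hr : 0 < u₁ / u₂ := div_pos h1 h2
  have hl1 : Real.log u₁ ≤ u₁ - 1 := Real.log_le_sub_one_of_pos h1
  have hl2 : Real.log u₂ ≤ u₂ - 1 := Real.log_le_sub_one_of_pos h2
  have hp1 : 0 < (u₁ / u₂) ^ α := Real.rpow_pos_of_pos hr α
  have hp2 : 0 < (u₁ / u₂) ^ (-α) := Real.rpow_pos_of_pos hr (-α)
  rcases le_total u₂ u₁ with h | h
  · have hr1 : 1 ≤ u₁ / u₂ := (one_le_div h2).mpr h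
    have h1' : 1 ≤ (u₁ / u₂) ^ α := Real.one_le_rpow hr1 hα.le
    nlinarith [mul_le_mul_of_nonneg_right h1' (sq_nonneg u₁), mul_pos hp2 (by positivity : (0:ℝ) < u₂ ^ 2), sq_nonneg (u₁ - u₂)]
  · have hr1 : u₁ / u₂ ≤ 1 := (div_le_one h2).mpr h
    have h1' : 1 ≤ (u₁ / u₂) ^ (-α) :=
      Real.one_le_rpow_of_pos_of_le_one_of_nonpos hr hr1 (by linarith)
    nlinarith [mul_le_mul_of_nonneg_right h1' (sq_nonneg u₂), mul_pos hp1 (by positivity : (0:ℝ) < u₁ ^ 2), sq_nonneg (u₁ - u₂)]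
end

section
/- For every α > 0 and all u₁, u₂ > 0, the Hessian of h(u₁,u₂) = (u₁/u₂)^α u₁² + (u₁/u₂)^{-α} u₂² + u₁ - log u₁ + u₂ - log u₂ is positive definite; equivalently, h is strictly convex on (0,∞)². -/
open Set Real

/-- Perspective-type function `y * (x/y)^p` is convex on the open quadrant for `p ≥ 1`. -/
lemma persp_aux {p : ℝ} (hp : 1 ≤ p) :
    ConvexOn ℝ (Set.Ioi (0:ℝ) ×ˢ Set.Ioi (0:ℝ))
      (fun u : ℝ × ℝ => u.2 * (u.1 / u.2) ^ p) := by
  refine ⟨(convex_Ioi 0).prod (convex_Ioi 0), ?_⟩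
  rintro ⟨x1, x2⟩ ⟨hx1, hx2⟩ ⟨y1, y2⟩ ⟨hy1, hy2⟩ a b ha hb hab
  simp only [Set.mem_Ioi] at hx1 hx2 hy1 hy2
  simp only [Prod.smul_mk, Prod.mk_add_mk, smul_eq_mul]
  rcases ha.eq_or_lt with rfl | ha'
  · simp at hab; subst hab; simp
  rcases hb.eq_or_lt with rfl | hb'
  · simp at hab; subst hab; simp
  have hs : 0 < a * x2 + b * y2 := by positivity
  have hw : (0:ℝ) ≤ a * x2 / (a * x2 + b * y2) := by positivity
  have hw' : (0:ℝ) ≤ b * y2 / (a * x2 + b * y2) := by positivity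
  have hwsum : a * x2 / (a * x2 + b * y2) + b * y2 / (a * x2 + b * y2) = 1 := by
    field_simp
  have ht : (x1 / x2 : ℝ) ∈ Set.Ici (0:ℝ) := Set.mem_Ici.2 (by positivity)
  have ht' : (y1 / y2 : ℝ) ∈ Set.Ici (0:ℝ) := Set.mem_Ici.2 (by positivity)
  have key := (convexOn_rpow hp).2 ht ht' hw hw' hwsum
  simp only [smul_eq_mul] at key
  have heq : (a * x1 + b * y1) / (a * x2 + b * y2)
      = a * x2 / (a * x2 + b * y2) * (x1 / x2) + b * y2 / (a * x2 + b * y2) * (y1 / y2) := by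
    field_simp
  calc (a * x2 + b * y2) * ((a * x1 + b * y1) / (a * x2 + b * y2)) ^ p
      = (a * x2 + b * y2) *
        (a * x2 / (a * x2 + b * y2) * (x1 / x2) + b * y2 / (a * x2 + b * y2) * (y1 / y2)) ^ p := by
        rw [heq]
    _ ≤ (a * x2 + b * y2) *
        (a * x2 / (a * x2 + b * y2) * (x1 / x2) ^ p + b * y2 / (a * x2 + b * y2) * (y1 / y2) ^ p) := by
        exact mul_le_mul_of_nonneg_left key hs.le
    _ = a * (x2 * (x1 / x2) ^ p) + b * (y2 * (y1 / y2) ^ p) := by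
        field_simp

/-- Symmetric version: `x * (y/x)^p` is convex on the open quadrant for `p ≥ 1`. -/
lemma persp_aux' {p : ℝ} (hp : 1 ≤ p) :
    ConvexOn ℝ (Set.Ioi (0:ℝ) ×ˢ Set.Ioi (0:ℝ))
      (fun u : ℝ × ℝ => u.1 * (u.2 / u.1) ^ p) := by
  refine ⟨(convex_Ioi 0).prod (convex_Ioi 0), ?_⟩
  rintro ⟨x1, x2⟩ ⟨hx1, hx2⟩ ⟨y1, y2⟩ ⟨hy1, hy2⟩ a b ha hb hab
  have := (persp_aux hp).2 (x := (x2, x1)) (y := (y2, y1))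
    ⟨hx2, hx1⟩ ⟨hy2, hy1⟩ ha hb hab
  simpa using this

/-- Square of a nonnegative convex function is convex. -/
lemma sq_convexOn {s : Set (ℝ × ℝ)} {f : ℝ × ℝ → ℝ} (hf : ConvexOn ℝ s f)
    (h0 : ∀ x ∈ s, 0 ≤ f x) : ConvexOn ℝ s (fun x => (f x) ^ 2) := by
  refine ⟨hf.1, fun x hx y hy a b ha hb hab => ?_⟩
  have h1 := hf.2 hx hy ha hb hab
  have h2 : (0:ℝ) ≤ f (a • x + b • y) := h0 _ (hf.1 hx hy ha hb hab)
  have h3 : f (a • x + b • y) ^ 2 ≤ (a • f x + b • f y) ^ 2 := by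
    exact pow_le_pow_left₀ h2 h1 2
  refine h3.trans ?_
  have h4 := (Even.convexOn_pow (even_two)).2 (Set.mem_univ (f x)) (Set.mem_univ (f y)) ha hb hab
  simpa using h4

/-- Sum of a strictly convex function applied to each coordinate is strictly convex. -/
lemma strict_sum {φ : ℝ → ℝ} (hφ : StrictConvexOn ℝ (Set.Ioi (0:ℝ)) φ) :
    StrictConvexOn ℝ (Set.Ioi (0:ℝ) ×ˢ Set.Ioi (0:ℝ))
      (fun u : ℝ × ℝ => φ u.1 + φ u.2) := by
  refine ⟨(convex_Ioi 0).prod (convex_Ioi 0), ?_⟩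
  rintro ⟨x1, x2⟩ ⟨hx1, hx2⟩ ⟨y1, y2⟩ ⟨hy1, hy2⟩ hne a b ha hb hab
  simp only [Prod.smul_mk, Prod.mk_add_mk, smul_eq_mul]
  have hne' : x1 ≠ y1 ∨ x2 ≠ y2 := by
    by_contra h
    push_neg at h
    exact hne (Prod.ext h.1 h.2)
  rcases hne' with h | h
  · have c1 := hφ.2 hx1 hy1 h ha hb hab
    have c2 := hφ.convexOn.2 hx2 hy2 ha.le hb.le hab
    simp only [smul_eq_mul] at c1 c2
    linarith
  · have c1 := hφ.convexOn.2 hx1 hy1 ha.le hb.le hab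
    have c2 := hφ.2 hx2 hy2 h ha hb hab
    simp only [smul_eq_mul] at c1 c2
    linarith

lemma key_eq (α x y : ℝ) (hx : 0 < x) (hy : 0 < y) :
    (x / y) ^ α * x ^ 2 + (x / y) ^ (-α) * y ^ 2 + x - Real.log x + y - Real.log y
      = (y * (x / y) ^ ((α + 2) / 2)) ^ 2 + (x * (y / x) ^ ((α + 2) / 2)) ^ 2
        + ((x - Real.log x) + (y - Real.log y)) := by
  have hxy : (0:ℝ) ≤ x / y := by positivity
  have hyx : (0:ℝ) ≤ y / x := by positivity
  have t1 : ((x / y : ℝ) ^ ((α + 2) / 2)) ^ 2 = (x / y) ^ (α + 2) := by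
    rw [← Real.rpow_natCast ((x / y) ^ ((α + 2) / 2)) 2, ← Real.rpow_mul hxy]
    norm_num
  have t2 : ((y / x : ℝ) ^ ((α + 2) / 2)) ^ 2 = (y / x) ^ (α + 2) := by
    rw [← Real.rpow_natCast ((y / x) ^ ((α + 2) / 2)) 2, ← Real.rpow_mul hyx]
    norm_num
  have r2 : ∀ z : ℝ, 0 ≤ z → z ^ (2:ℝ) = z ^ 2 := fun z hz => by
    rw [show (2:ℝ) = ((2:ℕ):ℝ) from by norm_num, Real.rpow_natCast]
  have e1 : (y * (x / y) ^ ((α + 2) / 2)) ^ 2 = (x / y) ^ α * x ^ 2 := by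
    have : (y * (x / y) ^ ((α + 2) / 2)) ^ 2 = y ^ 2 * ((x / y) ^ ((α + 2) / 2)) ^ 2 := by ring
    rw [this, t1, Real.rpow_add (by positivity), r2 _ hxy]
    field_simp
  have e2 : (x * (y / x) ^ ((α + 2) / 2)) ^ 2 = (x / y) ^ (-α) * y ^ 2 := by
    have h1 : (x * (y / x) ^ ((α + 2) / 2)) ^ 2 = x ^ 2 * ((y / x) ^ ((α + 2) / 2)) ^ 2 := by ring
    have h2 : (x / y : ℝ) ^ (-α) = (y / x) ^ α := by
      rw [Real.rpow_neg hxy, ← Real.inv_rpow hxy, inv_div]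
    rw [h1, t2, h2, Real.rpow_add (by positivity), r2 _ hyx]
    field_simp
  rw [e1, e2]
  ring

/-- The entropy density `h` is strictly convex on `(0,∞)²`. -/
theorem stmt_4 (α : ℝ) (hα : 0 < α) :
    StrictConvexOn ℝ (Set.Ioi (0:ℝ) ×ˢ Set.Ioi (0:ℝ))
      (fun u : ℝ × ℝ =>
        (u.1 / u.2) ^ α * u.1 ^ 2 + (u.1 / u.2) ^ (-α) * u.2 ^ 2
          + u.1 - Real.log u.1 + u.2 - Real.log u.2) := by
  set p := (α + 2) / 2 with hp_def
  have hp : (1:ℝ) ≤ p := by rw [hp_def]; linarith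
  have hφ : StrictConvexOn ℝ (Set.Ioi (0:ℝ)) (fun t : ℝ => t - Real.log t) := by
    have h1 : StrictConvexOn ℝ (Set.Ioi (0:ℝ)) (fun t : ℝ => -Real.log t) :=
      strictConcaveOn_log_Ioi.neg
    have h2 : ConvexOn ℝ (Set.Ioi (0:ℝ)) (fun t : ℝ => t) := convexOn_id (convex_Ioi 0)
    have h3 := h2.add_strictConvexOn h1
    refine ⟨h3.1, fun x hx y hy hne a b ha hb hab => ?_⟩
    have := h3.2 hx hy hne ha hb hab
    simp only [Pi.add_apply, smul_eq_mul] at this ⊢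
    linarith
  have hA : ConvexOn ℝ (Set.Ioi (0:ℝ) ×ˢ Set.Ioi (0:ℝ))
      (fun u : ℝ × ℝ => (u.2 * (u.1 / u.2) ^ p) ^ 2) := by
    refine sq_convexOn (persp_aux hp) ?_
    rintro ⟨x1, x2⟩ ⟨hx1, hx2⟩
    simp only [Set.mem_Ioi] at hx1 hx2
    positivity
  have hB : ConvexOn ℝ (Set.Ioi (0:ℝ) ×ˢ Set.Ioi (0:ℝ))
      (fun u : ℝ × ℝ => (u.1 * (u.2 / u.1) ^ p) ^ 2) := by
    refine sq_convexOn (persp_aux' hp) ?_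
    rintro ⟨x1, x2⟩ ⟨hx1, hx2⟩
    simp only [Set.mem_Ioi] at hx1 hx2
    positivity
  have hF : StrictConvexOn ℝ (Set.Ioi (0:ℝ) ×ˢ Set.Ioi (0:ℝ))
      (fun u : ℝ × ℝ => (u.2 * (u.1 / u.2) ^ p) ^ 2 + (u.1 * (u.2 / u.1) ^ p) ^ 2
        + ((u.1 - Real.log u.1) + (u.2 - Real.log u.2))) := by
    have := (hA.add hB).add_strictConvexOn (strict_sum hφ)
    exact this
  refine ⟨hF.1, ?_⟩
  intro x hx y hy hne a b ha hb hab
  have hc : a • x + b • y ∈ Set.Ioi (0:ℝ) ×ˢ Set.Ioi (0:ℝ) := hF.1 hx hy ha.le hb.le hab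
  obtain ⟨hx1, hx2⟩ := hx
  obtain ⟨hy1, hy2⟩ := hy
  obtain ⟨hc1, hc2⟩ := hc
  simp only [Set.mem_Ioi] at hx1 hx2 hy1 hy2 hc1 hc2
  have e1 := key_eq α x.1 x.2 hx1 hx2
  have e2 := key_eq α y.1 y.2 hy1 hy2
  have e3 := key_eq α (a • x + b • y).1 (a • x + b • y).2 hc1 hc2
  simp only []
  rw [e1, e2, e3]
  exact hF.2 ⟨hx1, hx2⟩ ⟨hy1, hy2⟩ hne ha hb hab
end

section
/- Let a : (0,∞) → (0,∞) be C¹ with a(r) ≥ r|a'(r)| for all r > 0. Then for all u₁, u₂ > 0, a(u₁/u₂)²(u₁² + u₂²) ≤ a(1)²(u₁² + u₂² + u₁⁴/u₂² + u₂⁴/u₁²). -/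
theorem stmt_9 (a a' : ℝ → ℝ) (hpos : ∀ r > 0, 0 < a r)
    (hderiv : ∀ r > 0, HasDerivAt a (a' r) r)
    (hcont : ContinuousOn a' (Set.Ioi 0))
    (hcond : ∀ r > 0, r * |a' r| ≤ a r)
    (u₁ u₂ : ℝ) (h1 : 0 < u₁) (h2 : 0 < u₂) :
    a (u₁ / u₂) ^ 2 * (u₁ ^ 2 + u₂ ^ 2) ≤
      a 1 ^ 2 * (u₁ ^ 2 + u₂ ^ 2 + u₁ ^ 4 / u₂ ^ 2 + u₂ ^ 4 / u₁ ^ 2) := by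
  set t := u₁ / u₂ with ht
  have htpos : 0 < t := div_pos h1 h2
  have ha1 : 0 < a 1 := hpos 1 one_pos
  have hat : 0 < a t := hpos t htpos
  -- case split
  rcases le_total 1 t with hcase | hcase
  · -- t ≥ 1 : a t ≤ a 1 * t, via a r / r antitone
    have hanti : AntitoneOn (fun r => a r / r) (Set.Ici 1) := by
      apply antitoneOn_of_deriv_nonpos (convex_Ici 1)
      · apply ContinuousOn.div
        · intro x hx
          exact (hderiv x (lt_of_lt_of_le one_pos hx)).continuousAt.continuousWithinAt
        · exact continuousOn_id
        · intro x hx; exact ne_of_gt (lt_of_lt_of_le one_pos hx)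
      · intro x hx
        rw [interior_Ici] at hx
        have hx0 : (0:ℝ) < x := lt_trans one_pos hx
        exact ((hderiv x hx0).div (hasDerivAt_id x) (ne_of_gt hx0)).differentiableAt.differentiableWithinAt
      · intro x hx
        rw [interior_Ici] at hx
        have hx0 : (0:ℝ) < x := lt_trans one_pos hx
        have hd := (hderiv x hx0).div (hasDerivAt_id x) (ne_of_gt hx0)
        simp only [id_eq] at hd
        rw [show (fun r => a r / r) = a / id from rfl, hd.deriv]
        have h1' : a' x * x ≤ a x := by
          calc a' x * x ≤ |a' x| * x := by
                apply mul_le_mul_of_nonneg_right (le_abs_self _) hx0.le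
          _ ≤ a x := by rw [mul_comm]; exact hcond x hx0
        have : a' x * x - a x * 1 ≤ 0 := by linarith
        exact div_nonpos_of_nonpos_of_nonneg this (sq_nonneg x)
    have hkey : a t ≤ a 1 * t := by
      have := hanti (Set.self_mem_Ici) (by exact hcase) hcase
      simp only [div_one] at this
      calc a t = (a t / t) * t := by field_simp
      _ ≤ a 1 * t := mul_le_mul_of_nonneg_right this htpos.le
    have hsq : a t ^ 2 ≤ a 1 ^ 2 * t ^ 2 := by nlinarith
    have ht2 : t ^ 2 = u₁ ^ 2 / u₂ ^ 2 := by rw [ht]; ring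
    have : a t ^ 2 * (u₁ ^ 2 + u₂ ^ 2) ≤ a 1 ^ 2 * (u₁ ^ 2 / u₂ ^ 2) * (u₁ ^ 2 + u₂ ^ 2) := by
      rw [← ht2]
      exact mul_le_mul_of_nonneg_right hsq (by positivity)
    refine this.trans ?_
    have h2' : u₂ ^ 2 ≠ 0 := by positivity
    have h1' : u₁ ^ 2 ≠ 0 := by positivity
    have hnn : 0 ≤ u₂ ^ 2 + u₂ ^ 4 / u₁ ^ 2 := by positivity
    have heq : a 1 ^ 2 * (u₁ ^ 2 / u₂ ^ 2) * (u₁ ^ 2 + u₂ ^ 2)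
        = a 1 ^ 2 * (u₁ ^ 4 / u₂ ^ 2 + u₁ ^ 2) := by field_simp
    rw [heq]; nlinarith [sq_nonneg (a 1)]
  · -- t ≤ 1 : a t ≤ a 1 / t, via r * a r monotone
    have hmono : MonotoneOn (fun r => r * a r) (Set.Icc t 1) := by
      apply monotoneOn_of_deriv_nonneg (convex_Icc t 1)
      · apply ContinuousOn.mul continuousOn_id
        intro x hx
        exact (hderiv x (lt_of_lt_of_le htpos hx.1)).continuousAt.continuousWithinAt
      · intro x hx
        rw [interior_Icc] at hx
        have hx0 : (0:ℝ) < x := lt_trans htpos hx.1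
        exact ((hasDerivAt_id x).mul (hderiv x hx0)).differentiableAt.differentiableWithinAt
      · intro x hx
        rw [interior_Icc] at hx
        have hx0 : (0:ℝ) < x := lt_trans htpos hx.1
        have hd := (hasDerivAt_id x).mul (hderiv x hx0)
        simp only [id_eq] at hd
        rw [show (fun r => r * a r) = id * a from rfl, hd.deriv]
        have h1' : -(x * a' x) ≤ a x := by
          have : x * (-a' x) ≤ x * |a' x| := mul_le_mul_of_nonneg_left (neg_le_abs _) hx0.le
          have := this.trans (hcond x hx0)
          linarith
        simp only [id_eq, one_mul]
        linarith
    have hkey : a t ≤ a 1 / t := by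
      have h := hmono (Set.left_mem_Icc.2 hcase) (Set.right_mem_Icc.2 hcase) hcase
      simp only [one_mul] at h
      rw [le_div_iff₀ htpos]
      linarith
    have hta : t * a t ≤ a 1 := by
      rw [le_div_iff₀ htpos] at hkey; linarith
    have hsq : a t ^ 2 ≤ a 1 ^ 2 / t ^ 2 := by
      rw [le_div_iff₀ (by positivity : (0:ℝ) < t ^ 2)]
      nlinarith [mul_le_mul hta hta (by positivity : (0:ℝ) ≤ t * a t) ha1.le]
    have ht2 : t ^ 2 = u₁ ^ 2 / u₂ ^ 2 := by rw [ht]; ring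
    have hdiv : a 1 ^ 2 / t ^ 2 = a 1 ^ 2 * (u₂ ^ 2 / u₁ ^ 2) := by
      rw [ht2]; field_simp
    have hb : a t ^ 2 * (u₁ ^ 2 + u₂ ^ 2) ≤ a 1 ^ 2 * (u₂ ^ 2 / u₁ ^ 2) * (u₁ ^ 2 + u₂ ^ 2) := by
      rw [← hdiv]
      exact mul_le_mul_of_nonneg_right hsq (by positivity)
    refine hb.trans ?_
    have h1' : u₁ ^ 2 ≠ 0 := by positivity
    have heq : a 1 ^ 2 * (u₂ ^ 2 / u₁ ^ 2) * (u₁ ^ 2 + u₂ ^ 2)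
        = a 1 ^ 2 * (u₂ ^ 2 + u₂ ^ 4 / u₁ ^ 2) := by field_simp
    rw [heq]
    have hnn : 0 ≤ u₁ ^ 2 + u₁ ^ 4 / u₂ ^ 2 := by positivity
    nlinarith [sq_nonneg (a 1)]
end

section
/- Let α > 0 with α(α+2) > 1, and let a : (0,∞) → (0,∞) be C¹ with a(r) ≥ r|a'(r)| for all r > 0. For u₁, u₂ > 0 set r = u₁/u₂ and let M⁽¹⁾ be the symmetric matrix with M₁₁ = (α+2)((α+1)a(r) + r a'(r)) r^α, det M⁽¹⁾ = (α(α+2)a(r)² - r² a'(r)²) r^{2α+2}. Then M₁₁ > 0 and det M⁽¹⁾ > 0, so M⁽¹⁾ is positive definite. -/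
lemma posdef_fin_two (M : Matrix (Fin 2) (Fin 2) ℝ) (h : M.IsHermitian)
    (h00 : 0 < M 0 0) (hdet : 0 < M.det) : M.PosDef := by
  have hsym : M 1 0 = M 0 1 := by
    have := h.apply 0 1
    simpa using this
  rw [Matrix.det_fin_two] at hdet
  refine Matrix.posDef_iff_dotProduct_mulVec.mpr ⟨h, fun x hx => ?_⟩
  have hx' : x 0 ≠ 0 ∨ x 1 ≠ 0 := by
    by_contra hc
    push_neg at hc
    exact hx (funext fun i => by fin_cases i <;> simp [hc.1, hc.2])
  have hq : dotProduct (star x) (M.mulVec x) =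
      M 0 0 * x 0 * x 0 + M 0 1 * x 0 * x 1 + M 0 1 * x 1 * x 0 + M 1 1 * x 1 * x 1 := by
    simp [dotProduct, Matrix.mulVec, Fin.sum_univ_two, hsym]
    ring
  rw [hsym] at hdet; rw [hq]
  by_cases h1 : x 1 = 0
  · have h0 : x 0 ≠ 0 := by tauto
    rw [h1]
    nlinarith [mul_pos h00 (pow_two_pos_of_ne_zero h0)]
  · nlinarith [sq_nonneg (M 0 0 * x 0 + M 0 1 * x 1),
      mul_pos hdet (pow_two_pos_of_ne_zero h1), h00.le]

theorem stmt_17 (α : ℝ) (hα : 0 < α) (hα2 : 1 < α * (α + 2))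
    (a a' : ℝ → ℝ) (hpos : ∀ r > 0, 0 < a r)
    (hderiv : ∀ r > 0, HasDerivAt a (a' r) r)
    (hcont : ContinuousOn a' (Set.Ioi 0))
    (hcond : ∀ r > 0, r * |a' r| ≤ a r)
    (u₁ u₂ : ℝ) (h1 : 0 < u₁) (h2 : 0 < u₂) :
    let r : ℝ := u₁ / u₂
    (0 < (α + 2) * ((α + 1) * a r + r * a' r) * r ^ α) ∧
    (0 < (α * (α + 2) * a r ^ 2 - r ^ 2 * a' r ^ 2) * r ^ (2 * α + 2)) ∧
    (∀ M : Matrix (Fin 2) (Fin 2) ℝ, M.IsHermitian →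
      M 0 0 = (α + 2) * ((α + 1) * a r + r * a' r) * r ^ α →
      M.det = (α * (α + 2) * a r ^ 2 - r ^ 2 * a' r ^ 2) * r ^ (2 * α + 2) →
      M.PosDef) := by
  intro r
  have hr : 0 < r := div_pos h1 h2
  have ha : 0 < a r := hpos r hr
  have hc := hcond r hr
  have habs : -(a r) ≤ r * a' r ∧ r * a' r ≤ a r := by
    constructor
    · nlinarith [neg_abs_le (a' r), mul_le_mul_of_nonneg_left (neg_abs_le (a' r)) hr.le]
    · nlinarith [le_abs_self (a' r), mul_le_mul_of_nonneg_left (le_abs_self (a' r)) hr.le]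
  have hsq : r ^ 2 * a' r ^ 2 ≤ a r ^ 2 := by
    have h0 : 0 ≤ r * |a' r| := mul_nonneg hr.le (abs_nonneg _)
    have := mul_le_mul hc hc h0 ha.le
    calc r ^ 2 * a' r ^ 2 = (r * |a' r|) * (r * |a' r|) := by
          rw [← sq_abs (a' r)]; ring
      _ ≤ a r * a r := this
      _ = a r ^ 2 := (sq (a r)).symm
  have hpow1 : (0:ℝ) < r ^ α := Real.rpow_pos_of_pos hr α
  have hpow2 : (0:ℝ) < r ^ (2 * α + 2) := Real.rpow_pos_of_pos hr _
  have hA : 0 < (α + 2) * ((α + 1) * a r + r * a' r) * r ^ α := by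
    have : 0 < (α + 1) * a r + r * a' r := by nlinarith [habs.1]
    positivity
  have hD : 0 < (α * (α + 2) * a r ^ 2 - r ^ 2 * a' r ^ 2) * r ^ (2 * α + 2) := by
    have : 0 < α * (α + 2) * a r ^ 2 - r ^ 2 * a' r ^ 2 := by nlinarith [hsq, pow_pos ha 2]
    positivity
  refine ⟨hA, hD, fun M hM h00 hdet => ?_⟩
  exact posdef_fin_two M hM (h00 ▸ hA) (hdet ▸ hD)
end

section
/- Let α > 0 and define w₁(u₁,u₂) = (α+2)u₁^{α+1}u₂^{-α} - α u₁^{-α-1}u₂^{α+2} - u₁^{-1} + 1 and w₂(u₁,u₂) = (α+2)u₁^{-α}u₂^{α+1} - α u₁^{α+2}u₂^{-α-1} - u₂^{-1} + 1. Then the map (u₁,u₂) ↦ (w₁,w₂) is a bijection from (0,∞)² onto ℝ². -/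
open Real Set

lemma amgm3 (α : ℝ) (hα : 0 < α) {a₁ b₁ a₂ b₂ : ℝ} (ha₁ : 0 < a₁) (hb₁ : 0 < b₁)
    (ha₂ : 0 < a₂) (hb₂ : 0 < b₂) :
    (α + 2) * (a₁ ^ (α+1) * b₁ ^ (-α) * a₂) ≤
      a₂ ^ (α+2) * b₂ ^ (-α) + α * (a₁ ^ (α+2) * b₁ ^ (-α-1) * b₂) + a₁ ^ (α+2) * b₁ ^ (-α) := by
  have h2 : (0:ℝ) < α + 2 := by linarith
  have key := Real.geom_mean_le_arith_mean3_weighted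
    (w₁ := 1/(α+2)) (w₂ := α/(α+2)) (w₃ := 1/(α+2))
    (p₁ := a₂ ^ (α+2) * b₂ ^ (-α)) (p₂ := a₁ ^ (α+2) * b₁ ^ (-α-1) * b₂)
    (p₃ := a₁ ^ (α+2) * b₁ ^ (-α))
    (by positivity) (by positivity) (by positivity)
    (by positivity) (by positivity) (by positivity)
    (by field_simp; ring)
  have gm_eq : (a₂ ^ (α+2) * b₂ ^ (-α)) ^ (1/(α+2)) *
      (a₁ ^ (α+2) * b₁ ^ (-α-1) * b₂) ^ (α/(α+2)) *
      (a₁ ^ (α+2) * b₁ ^ (-α)) ^ (1/(α+2)) = a₁ ^ (α+1) * b₁ ^ (-α) * a₂ := by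
    rw [← Real.exp_log ha₁, ← Real.exp_log hb₁, ← Real.exp_log ha₂, ← Real.exp_log hb₂]
    simp only [← Real.exp_add, ← Real.exp_mul, Real.exp_eq_exp]
    field_simp
    ring
  rw [gm_eq] at key
  have := mul_le_mul_of_nonneg_left key h2.le
  calc (α + 2) * (a₁ ^ (α+1) * b₁ ^ (-α) * a₂) ≤
      (α+2) * (1/(α+2) * (a₂ ^ (α+2) * b₂ ^ (-α)) + α/(α+2) * (a₁ ^ (α+2) * b₁ ^ (-α-1) * b₂)
        + 1/(α+2) * (a₁ ^ (α+2) * b₁ ^ (-α))) := this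
    _ = a₂ ^ (α+2) * b₂ ^ (-α) + α * (a₁ ^ (α+2) * b₁ ^ (-α-1) * b₂) + a₁ ^ (α+2) * b₁ ^ (-α) := by
        field_simp

lemma grad_ineq (α : ℝ) (hα : 0 < α) {a₁ b₁ a₂ b₂ : ℝ} (ha₁ : 0 < a₁) (hb₁ : 0 < b₁)
    (ha₂ : 0 < a₂) (hb₂ : 0 < b₂) :
    a₁ ^ (α+2) * b₁ ^ (-α) + (α+2) * a₁ ^ (α+1) * b₁ ^ (-α) * (a₂ - a₁)
      - α * a₁ ^ (α+2) * b₁ ^ (-α-1) * (b₂ - b₁) ≤ a₂ ^ (α+2) * b₂ ^ (-α) := by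
  have key := amgm3 α hα ha₁ hb₁ ha₂ hb₂
  have e1 : a₁ ^ (α+2) = a₁ ^ (α+1) * a₁ := by
    rw [show α+2 = (α+1)+1 by ring, Real.rpow_add_one ha₁.ne']
  have e2 : b₁ ^ (-α-1) * b₁ = b₁ ^ (-α) := by
    rw [← Real.rpow_add_one hb₁.ne']; ring_nf
  have f1 : a₁ ^ (α+1) * b₁ ^ (-α) * a₁ = a₁ ^ (α+2) * b₁ ^ (-α) := by rw [e1]; ring
  have f2 : a₁ ^ (α+2) * b₁ ^ (-α-1) * b₁ = a₁ ^ (α+2) * b₁ ^ (-α) := by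
    rw [← e2]; ring
  nlinarith [key, f1, f2]

set_option maxHeartbeats 1000000 in
lemma inj_aux (α : ℝ) (hα : 0 < α) {u₁ u₂ v₁ v₂ : ℝ} (hu1 : 0 < u₁) (hu2 : 0 < u₂)
    (hv1 : 0 < v₁) (hv2 : 0 < v₂)
    (E1 : (α+2)*u₁^(α+1)*u₂^(-α) - α*u₁^(-α-1)*u₂^(α+2) - u₁⁻¹ + 1
        = (α+2)*v₁^(α+1)*v₂^(-α) - α*v₁^(-α-1)*v₂^(α+2) - v₁⁻¹ + 1)
    (E2 : (α+2)*u₁^(-α)*u₂^(α+1) - α*u₁^(α+2)*u₂^(-α-1) - u₂⁻¹ + 1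
        = (α+2)*v₁^(-α)*v₂^(α+1) - α*v₁^(α+2)*v₂^(-α-1) - v₂⁻¹ + 1) :
    u₁ = v₁ ∧ u₂ = v₂ := by
  have c1 := grad_ineq α hα hu1 hu2 hv1 hv2
  have c2 := grad_ineq α hα hv1 hv2 hu1 hu2
  have c3 := grad_ineq α hα hu2 hu1 hv2 hv1
  have c4 := grad_ineq α hα hv2 hv1 hu2 hu1
  have m1 : ((α+2)*u₁^(α+1)*u₂^(-α) - α*u₁^(-α-1)*u₂^(α+2) - u₁⁻¹) * (u₁ - v₁)
      = ((α+2)*v₁^(α+1)*v₂^(-α) - α*v₁^(-α-1)*v₂^(α+2) - v₁⁻¹) * (u₁ - v₁) := by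
    linear_combination (u₁ - v₁) * E1
  have m2 : ((α+2)*u₁^(-α)*u₂^(α+1) - α*u₁^(α+2)*u₂^(-α-1) - u₂⁻¹) * (u₂ - v₂)
      = ((α+2)*v₁^(-α)*v₂^(α+1) - α*v₁^(α+2)*v₂^(-α-1) - v₂⁻¹) * (u₂ - v₂) := by
    linear_combination (u₂ - v₂) * E2
  have i1 : (v₁⁻¹ - u₁⁻¹) * (u₁ - v₁) = (u₁-v₁)^2 / (u₁*v₁) := by
    field_simp
  have i2 : (v₂⁻¹ - u₂⁻¹) * (u₂ - v₂) = (u₂-v₂)^2 / (u₂*v₂) := by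
    field_simp
  have key : (u₁-v₁)^2/(u₁*v₁) + (u₂-v₂)^2/(u₂*v₂) ≤ 0 := by
    linarith [c1, c2, c3, c4, m1, m2, i1, i2]
  have q1 : 0 ≤ (u₁-v₁)^2/(u₁*v₁) := by positivity
  have q2 : 0 ≤ (u₂-v₂)^2/(u₂*v₂) := by positivity
  have z1 : (u₁-v₁)^2/(u₁*v₁) = 0 := le_antisymm (by linarith) q1
  have z2 : (u₂-v₂)^2/(u₂*v₂) = 0 := le_antisymm (by linarith) q2
  constructor
  · have := (div_eq_zero_iff.mp z1).resolve_right (by positivity)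
    have := pow_eq_zero_iff (two_ne_zero) |>.mp this
    linarith
  · have := (div_eq_zero_iff.mp z2).resolve_right (by positivity)
    have := pow_eq_zero_iff (two_ne_zero) |>.mp this
    linarith

lemma sq_bound (α : ℝ) (hα : 0 < α) {a b : ℝ} (ha : 0 < a) (hb : 0 < b) :
    a^2 + b^2 ≤ a ^ (α+2) * b ^ (-α) + a ^ (-α) * b ^ (α+2) := by
  have h2 : (0:ℝ) < 2*α + 2 := by linarith
  have k1 := Real.geom_mean_le_arith_mean2_weighted
    (w₁ := (α+2)/(2*α+2)) (w₂ := α/(2*α+2))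
    (p₁ := a ^ (α+2) * b ^ (-α)) (p₂ := a ^ (-α) * b ^ (α+2))
    (by positivity) (by positivity) (by positivity) (by positivity) (by field_simp; ring)
  have k2 := Real.geom_mean_le_arith_mean2_weighted
    (w₁ := α/(2*α+2)) (w₂ := (α+2)/(2*α+2))
    (p₁ := a ^ (α+2) * b ^ (-α)) (p₂ := a ^ (-α) * b ^ (α+2))
    (by positivity) (by positivity) (by positivity) (by positivity) (by field_simp; ring)
  have g1 : (a ^ (α+2) * b ^ (-α)) ^ ((α+2)/(2*α+2)) * (a ^ (-α) * b ^ (α+2)) ^ (α/(2*α+2))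
      = a^2 := by
    rw [← Real.exp_log ha, ← Real.exp_log hb]
    simp only [pow_two, ← Real.exp_add, ← Real.exp_mul, Real.exp_eq_exp]
    field_simp
    ring
  have g2 : (a ^ (α+2) * b ^ (-α)) ^ (α/(2*α+2)) * (a ^ (-α) * b ^ (α+2)) ^ ((α+2)/(2*α+2))
      = b^2 := by
    rw [← Real.exp_log ha, ← Real.exp_log hb]
    simp only [pow_two, ← Real.exp_add, ← Real.exp_mul, Real.exp_eq_exp]
    field_simp
    ring
  rw [g1] at k1
  rw [g2] at k2
  have hsum : (α+2)/(2*α+2) * (a ^ (α+2) * b ^ (-α)) + α/(2*α+2) * (a ^ (-α) * b ^ (α+2))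
      + (α/(2*α+2) * (a ^ (α+2) * b ^ (-α)) + (α+2)/(2*α+2) * (a ^ (-α) * b ^ (α+2)))
      = a ^ (α+2) * b ^ (-α) + a ^ (-α) * b ^ (α+2) := by
    field_simp
    ring
  linarith [k1, k2, hsum]

lemma rho_lb (w : ℝ) {t : ℝ} (ht : 0 < t) : -(w^2) ≤ t^2 + t - Real.log t - w*t := by
  nlinarith [Real.log_le_sub_one_of_pos ht, sq_nonneg (t - w/2), sq_nonneg w]

lemma coer (w B : ℝ) : ∃ ε M : ℝ, 0 < ε ∧ ε ≤ 1 ∧ 1 ≤ M ∧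
    ∀ t : ℝ, 0 < t → t^2 + t - Real.log t - w*t ≤ B → ε ≤ t ∧ t ≤ M := by
  set M := |w| + max B 0 + 1 with hMdef
  have hw : 0 ≤ |w| := abs_nonneg w
  have hB0 : 0 ≤ max B 0 := le_max_right B 0
  have hBB : B ≤ max B 0 := le_max_left B 0
  have hM : 1 ≤ M := by simp only [hMdef]; linarith
  refine ⟨min 1 (Real.exp (-(max B 0 + |w| * M))), M, lt_min one_pos (Real.exp_pos _),
    min_le_left _ _, hM, ?_⟩
  intro t ht hρ
  have hlog := Real.log_le_sub_one_of_pos ht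
  have habs : w*t ≤ |w| * t := mul_le_mul_of_nonneg_right (le_abs_self w) ht.le
  have htM : t ≤ M := by
    by_contra h
    push_neg at h
    have p1 : 0 ≤ t - 1 := by linarith
    have p2 : 0 ≤ t - |w| - max B 0 - 1 := by simp only [hMdef] at h; linarith
    nlinarith [mul_nonneg p1 p2]
  constructor
  · have hwt : |w| * t ≤ |w| * M := mul_le_mul_of_nonneg_left htM hw
    have h2 : -(max B 0 + |w| * M) ≤ Real.log t := by nlinarith
    have := Real.exp_le_exp.mpr h2
    rw [Real.exp_log ht] at this
    exact le_trans (min_le_right _ _) this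
  · exact htM

noncomputable def phi (α w₁ w₂ : ℝ) (u : ℝ × ℝ) : ℝ :=
  u.1 ^ (α+2) * u.2 ^ (-α) + u.1 ^ (-α) * u.2 ^ (α+2) + u.1 - Real.log u.1
    + u.2 - Real.log u.2 - w₁ * u.1 - w₂ * u.2

lemma phi_contAt (α w₁ w₂ : ℝ) {u : ℝ × ℝ} (h1 : 0 < u.1) (h2 : 0 < u.2) :
    ContinuousAt (phi α w₁ w₂) u := by
  have r1 : ∀ c : ℝ, ContinuousAt (fun v : ℝ × ℝ => v.1 ^ c) u := fun c =>
    (Real.continuousAt_rpow_const u.1 c (Or.inl h1.ne')).comp continuousAt_fst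
  have r2 : ∀ c : ℝ, ContinuousAt (fun v : ℝ × ℝ => v.2 ^ c) u := fun c =>
    (Real.continuousAt_rpow_const u.2 c (Or.inl h2.ne')).comp continuousAt_snd
  have l1 : ContinuousAt (fun v : ℝ × ℝ => Real.log v.1) u :=
    (Real.continuousAt_log h1.ne').comp continuousAt_fst
  have l2 : ContinuousAt (fun v : ℝ × ℝ => Real.log v.2) u :=
    (Real.continuousAt_log h2.ne').comp continuousAt_snd
  unfold phi
  exact (((((((r1 (α+2)).mul (r2 (-α))).add ((r1 (-α)).mul (r2 (α+2)))).add
    continuousAt_fst).sub l1).add continuousAt_snd).sub l2).sub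
      (continuousAt_const.mul continuousAt_fst) |>.sub
      (continuousAt_const.mul continuousAt_snd)

lemma surj_aux (α : ℝ) (hα : 0 < α) (w₁ w₂ : ℝ) :
    ∃ u₁ u₂ : ℝ, 0 < u₁ ∧ 0 < u₂ ∧
      (α+2)*u₁^(α+1)*u₂^(-α) - α*u₁^(-α-1)*u₂^(α+2) - u₁⁻¹ + 1 = w₁ ∧
      (α+2)*u₁^(-α)*u₂^(α+1) - α*u₁^(α+2)*u₂^(-α-1) - u₂⁻¹ + 1 = w₂ := by
  set c := phi α w₁ w₂ (1,1) with hc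
  obtain ⟨ε₁, M₁, hε₁, hε₁1, hM₁, H₁⟩ := coer w₁ (c + w₂^2)
  obtain ⟨ε₂, M₂, hε₂, hε₂1, hM₂, H₂⟩ := coer w₂ (c + w₁^2)
  have hKc : IsCompact (Icc ((ε₁,ε₂) : ℝ × ℝ) (M₁,M₂)) := isCompact_Icc
  have h11 : ((1:ℝ),(1:ℝ)) ∈ Icc ((ε₁,ε₂) : ℝ × ℝ) (M₁,M₂) :=
    ⟨⟨hε₁1, hε₂1⟩, ⟨hM₁, hM₂⟩⟩
  have hcont : ContinuousOn (phi α w₁ w₂) (Icc ((ε₁,ε₂) : ℝ × ℝ) (M₁,M₂)) := fun u hu =>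
    (phi_contAt α w₁ w₂ (lt_of_lt_of_le hε₁ hu.1.1) (lt_of_lt_of_le hε₂ hu.1.2)).continuousWithinAt
  obtain ⟨x, hxK, hxmin⟩ := hKc.exists_isMinOn ⟨(1,1), h11⟩ hcont
  obtain ⟨x₁, x₂⟩ := x
  have hx1 : 0 < x₁ := lt_of_lt_of_le hε₁ hxK.1.1
  have hx2 : 0 < x₂ := lt_of_lt_of_le hε₂ hxK.1.2
  have hmin11 : phi α w₁ w₂ (x₁,x₂) ≤ c := isMinOn_iff.mp hxmin (1,1) h11
  have hglob : ∀ a b : ℝ, 0 < a → 0 < b → phi α w₁ w₂ (x₁,x₂) ≤ phi α w₁ w₂ (a,b) := by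
    intro a b ha hb
    by_cases hcb : phi α w₁ w₂ (a,b) ≤ c
    · have hsq := sq_bound α hα ha hb
      have l1 := rho_lb w₂ hb
      have l2 := rho_lb w₁ ha
      have hphi : phi α w₁ w₂ (a,b) = a ^ (α+2) * b ^ (-α) + a ^ (-α) * b ^ (α+2)
          + a - Real.log a + b - Real.log b - w₁*a - w₂*b := rfl
      rw [hphi] at hcb
      have r1 : a^2 + a - Real.log a - w₁*a ≤ c + w₂^2 := by linarith
      have r2 : b^2 + b - Real.log b - w₂*b ≤ c + w₁^2 := by linarith
      obtain ⟨ha1, ha2⟩ := H₁ a ha r1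
      obtain ⟨hb1, hb2⟩ := H₂ b hb r2
      exact isMinOn_iff.mp hxmin (a,b) ⟨⟨ha1, hb1⟩, ⟨ha2, hb2⟩⟩
    · push_neg at hcb
      linarith
  have e21 : α + 2 - 1 = α + 1 := by ring
  have d1 : HasDerivAt (fun t : ℝ => t ^ (α+2)) ((α+2)*x₁^(α+1)) x₁ := by
    have := Real.hasDerivAt_rpow_const (x := x₁) (p := α+2) (Or.inl hx1.ne')
    rwa [e21] at this
  have d2 : HasDerivAt (fun t : ℝ => t ^ (-α)) ((-α)*x₁^(-α-1)) x₁ :=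
    Real.hasDerivAt_rpow_const (Or.inl hx1.ne')
  have d3 : HasDerivAt (fun t : ℝ => t ^ (α+2)) ((α+2)*x₂^(α+1)) x₂ := by
    have := Real.hasDerivAt_rpow_const (x := x₂) (p := α+2) (Or.inl hx2.ne')
    rwa [e21] at this
  have d4 : HasDerivAt (fun t : ℝ => t ^ (-α)) ((-α)*x₂^(-α-1)) x₂ :=
    Real.hasDerivAt_rpow_const (Or.inl hx2.ne')
  have dw1 : HasDerivAt (fun t : ℝ => w₁ * t) w₁ x₁ := by
    simpa using (hasDerivAt_id x₁).const_mul w₁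
  have dw2 : HasDerivAt (fun t : ℝ => w₂ * t) w₂ x₂ := by
    simpa using (hasDerivAt_id x₂).const_mul w₂
  have hψ1 : IsLocalMin (fun t => phi α w₁ w₂ (t, x₂)) x₁ := by
    filter_upwards [eventually_gt_nhds hx1] with t ht
    exact hglob t x₂ ht hx2
  have hψ2 : IsLocalMin (fun t => phi α w₁ w₂ (x₁, t)) x₂ := by
    filter_upwards [eventually_gt_nhds hx2] with t ht
    exact hglob x₁ t hx1 ht
  have hd1 : HasDerivAt (fun t => phi α w₁ w₂ (t, x₂))
      ((α+2)*x₁^(α+1) * x₂ ^ (-α) + (-α)*x₁^(-α-1) * x₂ ^ (α+2) + 1 - x₁⁻¹ - w₁) x₁ := by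
    unfold phi
    exact (((((((d1.mul_const (x₂ ^ (-α))).add (d2.mul_const (x₂ ^ (α+2)))).add
      (hasDerivAt_id' x₁)).sub (Real.hasDerivAt_log hx1.ne')).add_const x₂).sub_const
        (Real.log x₂)).sub dw1).sub_const (w₂ * x₂)
  have hd2 : HasDerivAt (fun t => phi α w₁ w₂ (x₁, t))
      (x₁ ^ (α+2) * ((-α)*x₂^(-α-1)) + x₁ ^ (-α) * ((α+2)*x₂^(α+1)) + 1 - x₂⁻¹ - w₂) x₂ := by
    unfold phi
    exact (((((((d4.const_mul (x₁ ^ (α+2))).add (d3.const_mul (x₁ ^ (-α)))).add_const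
      x₁).sub_const (Real.log x₁)).add (hasDerivAt_id' x₂)).sub
        (Real.hasDerivAt_log hx2.ne')).sub_const (w₁ * x₁)).sub dw2
  have heq1 := hψ1.hasDerivAt_eq_zero hd1
  have heq2 := hψ2.hasDerivAt_eq_zero hd2
  exact ⟨x₁, x₂, hx1, hx2, by linarith, by linarith⟩

theorem stmt_19 (α : ℝ) (hα : 0 < α) :
    Set.BijOn
      (fun u : ℝ × ℝ =>
        (((α + 2) * u.1 ^ (α + 1) * u.2 ^ (-α) - α * u.1 ^ (-α - 1) * u.2 ^ (α + 2)
            - u.1⁻¹ + 1,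
          (α + 2) * u.1 ^ (-α) * u.2 ^ (α + 1) - α * u.1 ^ (α + 2) * u.2 ^ (-α - 1)
            - u.2⁻¹ + 1) : ℝ × ℝ))
      (Set.Ioi (0:ℝ) ×ˢ Set.Ioi (0:ℝ)) Set.univ := by
  refine ⟨fun u _ => Set.mem_univ _, ?_, ?_⟩
  · rintro ⟨u₁, u₂⟩ hu ⟨v₁, v₂⟩ hv heq
    simp only [Set.mem_prod, Set.mem_Ioi] at hu hv
    simp only [Prod.mk.injEq] at heq
    obtain ⟨E1, E2⟩ := heq
    obtain ⟨h1, h2⟩ := inj_aux α hα hu.1 hu.2 hv.1 hv.2 E1 E2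
    rw [h1, h2]
  · rintro ⟨w₁, w₂⟩ -
    obtain ⟨u₁, u₂, h1, h2, e1, e2⟩ := surj_aux α hα w₁ w₂
    refine ⟨(u₁, u₂), ⟨h1, h2⟩, ?_⟩
    simp only [Prod.mk.injEq]
    exact ⟨e1, e2⟩
end
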